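/- arXiv:2207.12874 — 3 statements merged into one kernel-verified Lean document; each statement's English description precedes it below -/
import Mathlib

section
/- For every ε > 0 there exists δ > 0 such that the following holds. Let G = (V1, V2, E) be a bipartite graph with |V1| ≥ |V2|/2 and let P = {p₁, …, p_k} with k = |V2|^{0.5} be an ε-pair-matching in V1, where p_i = (x_i, y_i). If W ⊆ V2 is chosen uniformly at random, then with probability at least 3/4 the set A = {d^W(x_i) − d^W(y_i) : i ∈ [k]} ∩ [−3|V2|^{0.5}, 3|V2|^{0.5}] has size at least δ|V2|^{0.5}. -/
open Finset

lemma cb_bound (m : ℕ) : (2*m+1) * (Nat.centralBinom m)^2 ≤ 16^m := by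
  induction m with
  | zero => simp [Nat.centralBinom]
  | succ n ih =>
    have h := Nat.succ_mul_centralBinom_succ n
    have key : (n+1)^2 * ((2*(n+1)+1) * (Nat.centralBinom (n+1))^2)
        = (2*(2*n+1))^2 * (2*n+3) * (Nat.centralBinom n)^2 := by
      have h2 : ((n+1) * Nat.centralBinom (n+1))^2 = (2*(2*n+1))^2 * (Nat.centralBinom n)^2 := by
        rw [h]; ring
      nlinarith [h2]
    have step1 : (n+1)^2 * ((2*(n+1)+1) * (Nat.centralBinom (n+1))^2)
        ≤ (n+1)^2 * 16^(n+1) := by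
      rw [key]
      calc (2*(2*n+1))^2 * (2*n+3) * (Nat.centralBinom n)^2
          ≤ 16*(n+1)^2 * ((2*n+1) * (Nat.centralBinom n)^2) := by
            nlinarith [sq_nonneg (Nat.centralBinom n)]
        _ ≤ 16*(n+1)^2 * 16^n := by
            exact Nat.mul_le_mul_left _ ih
        _ = (n+1)^2 * 16^(n+1) := by ring
    exact Nat.le_of_mul_le_mul_left step1 (by positivity)

lemma mid_bound (s : ℕ) : (s+1) * (s.choose (s/2))^2 ≤ 2 * 4^s := by
  rcases Nat.even_or_odd s with ⟨m, hm⟩ | ⟨m, hm⟩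
  · subst hm
    have h2 : (m+m)/2 = m := by omega
    rw [h2]
    have hcb : (m+m).choose m = Nat.centralBinom m := by
      rw [Nat.centralBinom]; congr 1; omega
    rw [hcb]
    have h16 : (4:ℕ)^(m+m) = 16^m := by
      rw [← two_mul, pow_mul]; norm_num
    rw [h16]
    nlinarith [cb_bound m]
  · subst hm
    have h2 : (2*m+1)/2 = m := by omega
    rw [h2]
    have hsym : (2*m+1).choose m = (2*m+1).choose (m+1) := by
      have := Nat.choose_symm (n := 2*m+1) (k := m+1) (by omega)
      simpa [show 2*m+1-(m+1) = m by omega] using this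
    have pascal : (2*m+1).choose (m+1) = (2*m).choose m + (2*m).choose (m+1) := by
      rw [Nat.choose_succ_succ]
    have hle : (2*m).choose (m+1) ≤ (2*m).choose m := by
      have := Nat.choose_le_middle (m+1) (2*m)
      simpa [show 2*m/2 = m by omega] using this
    have hcb : (2*m).choose m = Nat.centralBinom m := rfl
    have hp : (2*m+1).choose m ≤ 2 * Nat.centralBinom m := by
      rw [hsym, pascal, ← hcb]; omega
    have h16 : (4:ℕ)^(2*m+1) = 4 * 16^m := by
      rw [pow_succ']; congr 1; rw [pow_mul]; norm_num
    have key : (m+1) * (Nat.centralBinom m)^2 ≤ 16^m := by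
      have := cb_bound m
      nlinarith [sq_nonneg (Nat.centralBinom m)]
    rw [h16]
    nlinarith [key, hp, sq_nonneg (Nat.centralBinom m),
      Nat.mul_le_mul hp hp]

variable {α : Type} [Fintype α] [DecidableEq α]

def chi (W : Finset α) (v : α) : ℤ := if v ∈ W then 1 else -1

lemma chi_symmDiff_self (W : Finset α) (u : α) : chi (symmDiff W {u}) u = - chi W u := by
  simp [chi, Finset.mem_symmDiff]
  split <;> simp

lemma chi_symmDiff_ne (W : Finset α) (u v : α) (h : v ≠ u) :
    chi (symmDiff W {u}) v = chi W v := by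
  simp [chi, Finset.mem_symmDiff, h]

lemma sum_chi_mul (u v : α) (h : u ≠ v) :
    ∑ W : Finset α, chi W u * chi W v = 0 := by
  have inv : Function.Involutive (fun W : Finset α => symmDiff W {u}) := by
    intro W; simp [symmDiff_symmDiff_cancel_right]
  have := Equiv.sum_comp inv.toPerm (fun W => chi W u * chi W v)
  have key : ∑ W : Finset α, chi (symmDiff W {u}) u * chi (symmDiff W {u}) v
      = ∑ W : Finset α, chi W u * chi W v := this
  have flip : ∀ W : Finset α, chi (symmDiff W {u}) u * chi (symmDiff W {u}) v
      = -(chi W u * chi W v) := by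
    intro W
    rw [chi_symmDiff_self, chi_symmDiff_ne W u v (Ne.symm h)]; ring
  rw [Finset.sum_congr rfl (fun W _ => flip W), Finset.sum_neg_distrib] at key
  linarith [key]

lemma chi_sq (W : Finset α) (v : α) : chi W v * chi W v = 1 := by
  simp [chi]; split <;> norm_num

lemma variance_identity (g : α → ℤ) :
    ∑ W : Finset α, (∑ v, g v * chi W v)^2 = 2^(Fintype.card α) * ∑ v, (g v)^2 := by
  have expand : ∀ W : Finset α, (∑ v, g v * chi W v)^2
      = ∑ v, ∑ u, (g v * g u) * (chi W v * chi W u) := by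
    intro W
    rw [sq, Finset.sum_mul_sum]
    exact Finset.sum_congr rfl fun v _ => Finset.sum_congr rfl fun u _ => by ring
  simp_rw [expand]
  rw [Finset.sum_comm]
  have swap2 : ∀ v : α, ∑ W : Finset α, ∑ u, (g v * g u) * (chi W v * chi W u)
      = ∑ u, ∑ W : Finset α, (g v * g u) * (chi W v * chi W u) := fun v => Finset.sum_comm
  simp_rw [swap2]
  have inner : ∀ v u : α, ∑ W : Finset α, (g v * g u) * (chi W v * chi W u)
      = if u = v then 2^(Fintype.card α) * (g v)^2 else 0 := by
    intro v u
    by_cases h : u = v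
    · subst h
      simp_rw [chi_sq, mul_one, Finset.sum_const, Finset.card_univ, Fintype.card_finset]
      simp [sq]
    · rw [← Finset.mul_sum, sum_chi_mul v u (Ne.symm h), mul_zero]
      simp [h]
  simp_rw [inner]
  rw [Finset.mul_sum]
  exact Finset.sum_congr rfl fun v _ => by simp

lemma sum_chi_over (A W : Finset α) : ∑ v ∈ A, chi W v = 2*((A ∩ W).card : ℤ) - A.card := by
  have : ∀ v, chi W v = (if v ∈ W then (2:ℤ) else 0) - 1 := by
    intro v; simp [chi]; split <;> norm_num
  simp_rw [this, Finset.sum_sub_distrib, Finset.sum_const, Finset.sum_ite_mem]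
  simp [Finset.filter_mem_eq_inter]
  ring

lemma D_as_chi (A B : Finset α) (W : Finset α) :
    ∑ v, ((if v ∈ A then (1:ℤ) else 0) - (if v ∈ B then 1 else 0)) * chi W v
      = 2*(((A ∩ W).card : ℤ) - ((B ∩ W).card : ℤ)) - ((A.card : ℤ) - B.card) := by
  simp_rw [sub_mul, ite_mul, one_mul, zero_mul, Finset.sum_sub_distrib, Finset.sum_ite_mem,
    Finset.univ_inter, sum_chi_over]
  ring

lemma g_sq_sum (A B : Finset α) (hAB : Disjoint A B) :
    ∑ v, ((if v ∈ A then (1:ℤ) else 0) - (if v ∈ B then 1 else 0))^2 ≤ (Fintype.card α : ℤ) := by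
  have : ∀ v, ((if v ∈ A then (1:ℤ) else 0) - (if v ∈ B then 1 else 0))^2 ≤ 1 := by
    intro v; split <;> split <;> norm_num
  calc ∑ v, ((if v ∈ A then (1:ℤ) else 0) - (if v ∈ B then 1 else 0))^2
      ≤ ∑ _v : α, (1:ℤ) := Finset.sum_le_sum (fun v _ => this v)
    _ = (Fintype.card α : ℤ) := by simp

lemma chebyshev_count (A B : Finset α) (hAB : Disjoint A B)
    (hba : B.card ≤ A.card)
    (hd : (A.card : ℝ) - B.card ≤ Real.sqrt (Fintype.card α))
    (hn : 1 ≤ Fintype.card α) :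
    ((Finset.univ.filter (fun W : Finset α =>
      3 * Real.sqrt (Fintype.card α) < |(((A ∩ W).card : ℤ) - ((B ∩ W).card : ℤ) : ℤ)|)).card : ℝ) * 25
      ≤ 2^(Fintype.card α) := by
  set n := Fintype.card α
  set g : α → ℤ := fun v => (if v ∈ A then (1:ℤ) else 0) - (if v ∈ B then 1 else 0) with hg
  have hvar : ∑ W : Finset α, ((∑ v, g v * chi W v : ℤ) : ℝ)^2 ≤ 2^n * n := by
    have := variance_identity g
    have h2 := g_sq_sum A B hAB
    have : ∑ W : Finset α, (∑ v, g v * chi W v)^2 ≤ 2^n * n := by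
      rw [this]; exact mul_le_mul_of_nonneg_left h2 (by positivity)
    calc ∑ W : Finset α, ((∑ v, g v * chi W v : ℤ) : ℝ)^2
        = ((∑ W : Finset α, (∑ v, g v * chi W v)^2 : ℤ) : ℝ) := by push_cast; ring_nf
      _ ≤ ((2^n * n : ℤ) : ℝ) := by exact_mod_cast this
      _ = 2^n * n := by push_cast; ring
  have hpt : ∀ W ∈ Finset.univ.filter (fun W : Finset α =>
      3 * Real.sqrt n < |(((A ∩ W).card : ℤ) - ((B ∩ W).card : ℤ) : ℤ)|),
      25 * (n:ℝ) < ((∑ v, g v * chi W v : ℤ) : ℝ)^2 := by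
    intro W hW
    rw [Finset.mem_filter] at hW
    have hW' := hW.2
    rw [D_as_chi A B W]
    set D : ℤ := ((A ∩ W).card : ℤ) - ((B ∩ W).card : ℤ)
    have habs : 3 * Real.sqrt n < |(D:ℝ)| := by
      calc 3 * Real.sqrt n < ((|D| : ℤ) : ℝ) := hW'
        _ = |(D:ℝ)| := by push_cast; ring
    have hsq : Real.sqrt n * Real.sqrt n = n := Real.mul_self_sqrt (by positivity)
    have hsn : (0:ℝ) ≤ Real.sqrt n := Real.sqrt_nonneg _
    have hd0 : (0:ℝ) ≤ (A.card : ℝ) - B.card := by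
      have : (B.card : ℝ) ≤ A.card := by exact_mod_cast hba
      linarith
    have key : 5 * Real.sqrt n < |((2*D - ((A.card:ℤ) - B.card) : ℤ) : ℝ)| := by
      push_cast
      have : |(2*(D:ℝ) - ((A.card:ℝ) - B.card))| ≥ 2*|(D:ℝ)| - ((A.card:ℝ) - B.card) := by
        have := abs_sub_abs_le_abs_sub (2*(D:ℝ)) ((A.card:ℝ) - B.card)
        have h1 : |2*(D:ℝ)| = 2*|(D:ℝ)| := by rw [abs_mul]; norm_num
        have h2 : |((A.card:ℝ) - B.card)| = (A.card:ℝ) - B.card := abs_of_nonneg hd0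
        linarith
      linarith
    have h5 : (0:ℝ) ≤ 5 * Real.sqrt n := by positivity
    calc 25 * (n:ℝ) = (5 * Real.sqrt n)^2 := by
          rw [mul_pow, Real.sq_sqrt (by positivity : (0:ℝ) ≤ (n:ℝ))]; ring
      _ < ((2*D - ((A.card:ℤ) - B.card) : ℤ) : ℝ)^2 := by
          have := pow_lt_pow_left₀ key h5 (by norm_num : (2:ℕ) ≠ 0)
          rwa [sq_abs] at this
  set F := Finset.univ.filter (fun W : Finset α =>
      3 * Real.sqrt n < |(((A ∩ W).card : ℤ) - ((B ∩ W).card : ℤ) : ℤ)|) with hF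
  have h1 : (F.card : ℝ) * (25 * n) ≤ ∑ W ∈ F, ((∑ v, g v * chi W v : ℤ) : ℝ)^2 := by
    have := Finset.card_nsmul_le_sum F (fun W => ((∑ v, g v * chi W v : ℤ) : ℝ)^2) (25 * (n:ℝ))
      (fun W hW => le_of_lt (hpt W hW))
    simpa [nsmul_eq_mul] using this
  have h2 : ∑ W ∈ F, ((∑ v, g v * chi W v : ℤ) : ℝ)^2
      ≤ ∑ W : Finset α, ((∑ v, g v * chi W v : ℤ) : ℝ)^2 :=
    Finset.sum_le_sum_of_subset_of_nonneg (Finset.subset_univ F) (fun W _ _ => sq_nonneg _)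
  have hfin : (F.card : ℝ) * (25 * n) ≤ 2^n * n := le_trans h1 (le_trans h2 hvar)
  have hnpos : (0:ℝ) < n := by exact_mod_cast hn
  have := le_of_mul_le_mul_right (by linarith : (F.card : ℝ) * 25 * n ≤ 2^n * n) hnpos
  linarith

lemma sum_split (c : α → ℤ) (W S : Finset α) :
    ∑ v ∈ W, c v = ∑ v ∈ W \ S, c v + ∑ v ∈ W ∩ S, c v := by
  rw [← Finset.sum_union (Finset.disjoint_sdiff_inter W S), Finset.sdiff_union_inter]

lemma fiber_bound (c : α → ℤ) (S : Finset α) (hc : ∀ v ∈ S, 1 ≤ c v) (T : Finset α) (t : ℤ) :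
    ((Finset.univ.filter (fun W : Finset α => (∑ v ∈ W, c v = t) ∧ W \ S = T)).card)
      ≤ (S.card.choose (S.card / 2)) := by
  classical
  set F := Finset.univ.filter (fun W : Finset α => (∑ v ∈ W, c v = t) ∧ W \ S = T) with hFdef
  set ψ : Finset α → Finset {v // v ∈ S} := fun W => (W ∩ S).subtype (· ∈ S) with hψ
  have hmem : ∀ W₁ W₂ : Finset α, ψ W₁ ⊆ ψ W₂ → W₁ ∩ S ⊆ W₂ ∩ S := by
    intro W₁ W₂ h v hv
    have hvS : v ∈ S := (Finset.mem_inter.mp hv).2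
    have : (⟨v, hvS⟩ : {v // v ∈ S}) ∈ ψ W₁ := by
      simp [hψ, Finset.mem_subtype, hv]
    have := h this
    simpa [hψ, Finset.mem_subtype] using this
  have hinj : Set.InjOn ψ F := by
    intro W₁ h₁ W₂ h₂ heq
    simp only [hFdef, Finset.coe_filter, Set.mem_setOf_eq, Finset.mem_univ, true_and] at h₁ h₂
    have e1 : W₁ ∩ S = W₂ ∩ S :=
      Finset.Subset.antisymm (hmem _ _ heq.le) (hmem _ _ heq.ge)
    have : W₁ \ S ∪ W₁ ∩ S = W₂ \ S ∪ W₂ ∩ S := by rw [h₁.2, h₂.2, e1]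
    rwa [Finset.sdiff_union_inter, Finset.sdiff_union_inter] at this
  have hanti : IsAntichain (· ⊆ ·) (((F.image ψ : Finset (Finset {v // v ∈ S})) : Set (Finset {v // v ∈ S}))) := by
    intro a ha b hb hne hab
    simp only [Finset.coe_image, Set.mem_image, Finset.mem_coe] at ha hb
    obtain ⟨W₁, hW₁, rfl⟩ := ha
    obtain ⟨W₂, hW₂, rfl⟩ := hb
    simp only [hFdef, Finset.mem_filter, Finset.mem_univ, true_and] at hW₁ hW₂
    have hsub : W₁ ∩ S ⊆ W₂ ∩ S := hmem _ _ hab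
    have hssub : W₁ ∩ S ⊂ W₂ ∩ S := by
      refine lt_of_le_of_ne hsub ?_
      intro h
      exact hne (by rw [hψ]; simp only; rw [h])
    have hdiff : ((W₂ ∩ S) \ (W₁ ∩ S)).Nonempty := by
      rw [Finset.sdiff_nonempty]
      exact fun h => hssub.2 h
    have hsum1 : ∑ v ∈ W₁, c v = t := hW₁.1
    have hsum2 : ∑ v ∈ W₂, c v = t := hW₂.1
    have hT : W₁ \ S = W₂ \ S := by rw [hW₁.2, hW₂.2]
    have e2 : ∑ v ∈ W₂ ∩ S, c v - ∑ v ∈ W₁ ∩ S, c v = 0 := by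
      have := sum_split c W₁ S
      have := sum_split c W₂ S
      rw [sum_split c W₁ S] at hsum1
      rw [sum_split c W₂ S] at hsum2
      rw [hT] at hsum1
      linarith
    have e3 : ∑ v ∈ W₂ ∩ S, c v - ∑ v ∈ W₁ ∩ S, c v = ∑ v ∈ (W₂ ∩ S) \ (W₁ ∩ S), c v := by
      have := Finset.sum_sdiff (f := c) hsub
      linarith
    have e4 : (1:ℤ) ≤ ∑ v ∈ (W₂ ∩ S) \ (W₁ ∩ S), c v := by
      obtain ⟨w, hw⟩ := hdiff
      have hcard : 1 ≤ ((W₂ ∩ S) \ (W₁ ∩ S)).card := Finset.card_pos.mpr ⟨w, hw⟩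
      calc (1:ℤ) ≤ ∑ _v ∈ (W₂ ∩ S) \ (W₁ ∩ S), (1:ℤ) := by
            simp only [Finset.sum_const, nsmul_eq_mul, mul_one]
            exact_mod_cast hcard
        _ ≤ ∑ v ∈ (W₂ ∩ S) \ (W₁ ∩ S), c v := by
            apply Finset.sum_le_sum
            intro v hv
            have : v ∈ S := (Finset.mem_inter.mp (Finset.mem_sdiff.mp hv).1).2
            exact hc v this
    rw [e3] at e2
    linarith
  have hsp := IsAntichain.sperner hanti
  rw [Fintype.card_coe] at hsp
  calc F.card = (F.image ψ).card := (Finset.card_image_of_injOn hinj).symm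
    _ ≤ S.card.choose (S.card / 2) := hsp

lemma collision_count (c : α → ℤ) (S : Finset α) (hc : ∀ v ∈ S, 1 ≤ c v) (t : ℤ) :
    ((Finset.univ.filter (fun W : Finset α => ∑ v ∈ W, c v = t)).card)
      ≤ 2^(Fintype.card α - S.card) * (S.card.choose (S.card / 2)) := by
  classical
  rw [Finset.card_eq_sum_card_fiberwise
    (f := fun W => W \ S) (t := (Finset.univ \ S).powerset)
    (fun W _ => by simp [Finset.mem_powerset])]
  calc ∑ T ∈ (Finset.univ \ S).powerset,
        ((Finset.univ.filter (fun W : Finset α => ∑ v ∈ W, c v = t)).filter (fun W => W \ S = T)).card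
      ≤ ∑ _T ∈ (Finset.univ \ S).powerset, S.card.choose (S.card / 2) := by
        apply Finset.sum_le_sum
        intro T _
        rw [Finset.filter_filter]
        exact fiber_bound c S hc T t
    _ = 2^(Fintype.card α - S.card) * (S.card.choose (S.card / 2)) := by
        rw [Finset.sum_const, Finset.card_powerset, Finset.card_sdiff_of_subset (Finset.subset_univ S),
          Finset.card_univ, smul_eq_mul]

-- |P∩W| - |Q∩W| = |(P\Q)∩W| - |(Q\P)∩W|
lemma inter_card_diff (P Q W : Finset α) :
    ((P ∩ W).card : ℤ) - ((Q ∩ W).card : ℤ)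
      = (((P \ Q) ∩ W).card : ℤ) - (((Q \ P) ∩ W).card : ℤ) := by
  have h1 : ((P \ Q) ∩ W) ∪ ((P ∩ Q) ∩ W) = P ∩ W := by
    ext v; simp [Finset.mem_sdiff, Finset.mem_inter, Finset.mem_union]; tauto
  have h2 : ((Q \ P) ∩ W) ∪ ((P ∩ Q) ∩ W) = Q ∩ W := by
    ext v; simp [Finset.mem_sdiff, Finset.mem_inter, Finset.mem_union]; tauto
  have d1 : Disjoint ((P \ Q) ∩ W) ((P ∩ Q) ∩ W) := by
    rw [Finset.disjoint_left]; intro a ha hb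
    simp only [Finset.mem_inter, Finset.mem_sdiff] at ha hb
    exact ha.1.2 hb.1.2
  have d2 : Disjoint ((Q \ P) ∩ W) ((P ∩ Q) ∩ W) := by
    rw [Finset.disjoint_left]; intro a ha hb
    simp only [Finset.mem_inter, Finset.mem_sdiff] at ha hb
    exact ha.1.2 hb.1.1
  have c1 := Finset.card_union_of_disjoint d1
  have c2 := Finset.card_union_of_disjoint d2
  rw [h1] at c1; rw [h2] at c2
  omega

-- |P\Q| - |Q\P| = |P| - |Q|
lemma sdiff_card_diff (P Q : Finset α) :
    ((P \ Q).card : ℤ) - ((Q \ P).card : ℤ) = (P.card : ℤ) - Q.card := by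
  have c1 : (P \ Q).card + (P ∩ Q).card = P.card := Finset.card_sdiff_add_card_inter P Q
  have c2 : (Q \ P).card + (Q ∩ P).card = Q.card := Finset.card_sdiff_add_card_inter Q P
  rw [Finset.inter_comm] at c2
  omega

-- |P∩W| as a sum of indicators over W
lemma inter_card_as_sum (P W : Finset α) :
    ((P ∩ W).card : ℤ) = ∑ v ∈ W, (if v ∈ P then (1:ℤ) else 0) := by
  rw [Finset.sum_ite_mem, Finset.inter_comm]
  simp
open Finset

lemma distinct_values (k : ℕ) (D : Fin k → ℤ) (t : ℝ) (C2 : ℝ)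
    (hm1 : (((Finset.univ.filter (fun i : Fin k => ¬ ((|D i| : ℤ):ℝ) ≤ t)).card : ℝ)) ≤ 8/25 * k)
    (hm2 : ((((Finset.univ ×ˢ Finset.univ).filter
        (fun p : Fin k × Fin k => p.1 ≠ p.2 ∧ D p.1 = D p.2)).card : ℝ)) ≤ C2 * k)
    (hk : 1 ≤ k) (hC2 : 0 ≤ C2) :
    (17/25)^2 / (1 + C2) * k ≤
      (((Finset.univ.image D).filter (fun z : ℤ => ((|z|:ℤ):ℝ) ≤ t)).card : ℝ) := by
  classical
  set I := Finset.univ.filter (fun i : Fin k => ((|D i| : ℤ):ℝ) ≤ t) with hIdef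
  have hIcard : I.card + (Finset.univ.filter (fun i : Fin k => ¬ ((|D i| : ℤ):ℝ) ≤ t)).card
      = k := by
    rw [Finset.card_filter_add_card_filter_not]
    simp
  have hI : (17:ℝ)/25 * k ≤ I.card := by
    have : (I.card : ℝ) = k - ((Finset.univ.filter (fun i : Fin k => ¬ ((|D i| : ℤ):ℝ) ≤ t)).card : ℝ) := by
      have := hIcard; push_cast [← this]; ring
    rw [this]; linarith
  have hIk : (I.card : ℝ) ≤ k := by
    exact_mod_cast Finset.card_le_card (Finset.filter_subset _ _) |>.trans (by simp)
  set vals := I.image D with hvals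
  have hsub : vals ⊆ (Finset.univ.image D).filter (fun z : ℤ => ((|z|:ℤ):ℝ) ≤ t) := by
    intro z hz
    rw [hvals, Finset.mem_image] at hz
    obtain ⟨i, hi, rfl⟩ := hz
    rw [hIdef, Finset.mem_filter] at hi
    rw [Finset.mem_filter]
    exact ⟨Finset.mem_image_of_mem D (Finset.mem_univ i), hi.2⟩
  have hcards : vals.card ≤ ((Finset.univ.image D).filter (fun z : ℤ => ((|z|:ℤ):ℝ) ≤ t)).card :=
    Finset.card_le_card hsub
  -- fiber decomposition
  have hfib : I.card = ∑ z ∈ vals, (I.filter (fun i => D i = z)).card :=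
    Finset.card_eq_sum_card_image D I
  -- pair count
  set P := (I ×ˢ I).filter (fun p : Fin k × Fin k => D p.1 = D p.2) with hP
  have hPfib : P.card = ∑ z ∈ vals, ((I.filter (fun i => D i = z)).card)^2 := by
    rw [Finset.card_eq_sum_card_fiberwise (f := fun p => D p.1) (t := vals)
      (fun p hp => by
        simp only [hP, Finset.mem_coe, Finset.mem_filter, Finset.mem_product] at hp
        exact Finset.mem_image_of_mem D hp.1.1)]
    apply Finset.sum_congr rfl
    intro z _
    have : P.filter (fun p => D p.1 = z)
        = (I.filter (fun i => D i = z)) ×ˢ (I.filter (fun i => D i = z)) := by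
      ext p
      simp only [hP, Finset.mem_filter, Finset.mem_product]
      constructor
      · rintro ⟨⟨⟨h1, h2⟩, h3⟩, h4⟩
        exact ⟨⟨h1, h4⟩, ⟨h2, by rw [← h3, h4]⟩⟩
      · rintro ⟨⟨h1, h2⟩, h3, h4⟩
        exact ⟨⟨⟨h1, h3⟩, by rw [h2, h4]⟩, h2⟩
    rw [this, Finset.card_product, sq]
  have hPbound : P.card ≤ I.card +
      ((Finset.univ ×ˢ Finset.univ).filter
        (fun p : Fin k × Fin k => p.1 ≠ p.2 ∧ D p.1 = D p.2)).card := by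
    have hsplit : P.card = (P.filter (fun p => p.1 = p.2)).card
        + (P.filter (fun p => ¬ p.1 = p.2)).card :=
      (Finset.card_filter_add_card_filter_not _).symm
    have h1 : (P.filter (fun p => p.1 = p.2)).card ≤ I.card := by
      apply Finset.card_le_card_of_injOn (fun p => p.1)
      · intro p hp
        simp only [hP, Finset.mem_coe, Finset.mem_filter, Finset.mem_product] at hp
        exact hp.1.1.1
      · intro p hp q hq hpq
        simp only [Finset.mem_coe, Finset.mem_filter] at hp hq
        have h1 : p.1 = q.1 := hpq
        rw [Prod.ext_iff]
        exact ⟨h1, by rw [← hp.2, ← hq.2]; exact h1⟩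
    have h2 : (P.filter (fun p => ¬ p.1 = p.2)).card ≤
        ((Finset.univ ×ˢ Finset.univ).filter
          (fun p : Fin k × Fin k => p.1 ≠ p.2 ∧ D p.1 = D p.2)).card := by
      apply Finset.card_le_card
      intro p hp
      simp only [hP, Finset.mem_filter, Finset.mem_product] at hp ⊢
      exact ⟨⟨Finset.mem_univ _, Finset.mem_univ _⟩, hp.2, hp.1.2⟩
    omega
  -- Cauchy-Schwarz
  have hCS : ((I.card : ℝ))^2 ≤ (vals.card : ℝ) * P.card := by
    rw [hfib, hPfib]
    push_cast
    calc (∑ z ∈ vals, ((I.filter (fun i => D i = z)).card : ℝ))^2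
        ≤ vals.card * ∑ z ∈ vals, ((I.filter (fun i => D i = z)).card : ℝ)^2 :=
          sq_sum_le_card_mul_sum_sq
      _ = (vals.card : ℝ) * ∑ z ∈ vals, ((I.filter (fun i => D i = z)).card : ℝ)^2 := by norm_num
  -- final arithmetic
  have hPreal : (P.card : ℝ) ≤ k + C2 * k := by
    have : (P.card : ℝ) ≤ (I.card : ℝ) +
        (((Finset.univ ×ˢ Finset.univ).filter
          (fun p : Fin k × Fin k => p.1 ≠ p.2 ∧ D p.1 = D p.2)).card : ℝ) := by
      exact_mod_cast hPbound
    linarith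
  have hkpos : (0:ℝ) < k := by exact_mod_cast hk
  have hvpos : (0:ℝ) ≤ (vals.card : ℝ) := by positivity
  have key : ((17:ℝ)/25 * k)^2 ≤ (vals.card : ℝ) * ((1 + C2) * k) := by
    calc ((17:ℝ)/25 * k)^2 ≤ ((I.card : ℝ))^2 := by
          apply pow_le_pow_left₀ (by positivity) hI
      _ ≤ (vals.card : ℝ) * P.card := hCS
      _ ≤ (vals.card : ℝ) * ((1 + C2) * k) := by
          apply mul_le_mul_of_nonneg_left _ hvpos
          linarith
  have h1C2 : (0:ℝ) < 1 + C2 := by linarith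
  have final : (17/25)^2 / (1 + C2) * k ≤ (vals.card : ℝ) := by
    rw [div_mul_eq_mul_div, div_le_iff₀ h1C2]
    have := key
    nlinarith [key, hkpos]
  calc (17/25)^2 / (1 + C2) * (k:ℝ) ≤ (vals.card : ℝ) := final
    _ ≤ _ := by exact_mod_cast hcards

variable {α : Type} [Fintype α] [DecidableEq α]

lemma cheb' (P Q : Finset α) (hba : Q.card ≤ P.card)
    (hd : (P.card : ℝ) - Q.card ≤ Real.sqrt (Fintype.card α))
    (hn : 1 ≤ Fintype.card α) :
    ((Finset.univ.filter (fun W : Finset α =>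
      ¬ ((|((P ∩ W).card : ℤ) - ((Q ∩ W).card : ℤ)| : ℤ) : ℝ) ≤ 3 * Real.sqrt (Fintype.card α))).card : ℝ) * 25
      ≤ 2^(Fintype.card α) := by
  classical
  have hAB : Disjoint (P \ Q) (Q \ P) := disjoint_sdiff_sdiff
  have hcd := sdiff_card_diff P Q
  have hba' : (Q \ P).card ≤ (P \ Q).card := by
    have : ((Q:Finset α).card : ℤ) ≤ P.card := by exact_mod_cast hba
    omega
  have hd' : (((P \ Q).card : ℝ)) - ((Q \ P).card : ℝ) ≤ Real.sqrt (Fintype.card α) := by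
    have : (((P \ Q).card : ℝ)) - ((Q \ P).card : ℝ) = (P.card : ℝ) - Q.card := by
      exact_mod_cast congrArg (fun z : ℤ => (z : ℝ)) hcd
    rw [this]; exact hd
  have := chebyshev_count (P \ Q) (Q \ P) hAB hba' hd' hn
  have heq : Finset.univ.filter (fun W : Finset α =>
      ¬ ((|((P ∩ W).card : ℤ) - ((Q ∩ W).card : ℤ)| : ℤ) : ℝ) ≤ 3 * Real.sqrt (Fintype.card α))
      = Finset.univ.filter (fun W : Finset α =>
      3 * Real.sqrt (Fintype.card α) < |((((P \ Q) ∩ W).card : ℤ) - (((Q \ P) ∩ W).card : ℤ) : ℤ)|) := by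
    apply Finset.filter_congr
    intro W _
    rw [not_le, ← inter_card_diff]
  rw [heq]
  exact this

lemma coll' (ε : ℝ) (hε : 0 < ε) (N1 N2 N3 N4 : Finset α)
    (hn : 1 ≤ Fintype.card α)
    (hS : ε * (Fintype.card α) ≤ (((N1 \ N2) \ N3).card : ℝ)) :
    ((Finset.univ.filter (fun W : Finset α =>
      ((N1 ∩ W).card : ℤ) - ((N2 ∩ W).card : ℤ)
        = ((N3 ∩ W).card : ℤ) - ((N4 ∩ W).card : ℤ))).card : ℝ)
      ≤ Real.sqrt 2 / Real.sqrt (ε * Fintype.card α) * 2^(Fintype.card α) := by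
  classical
  set n := Fintype.card α
  set S := (N1 \ N2) \ N3 with hSdef
  set c : α → ℤ := fun v => ((if v ∈ N1 then (1:ℤ) else 0) - (if v ∈ N2 then 1 else 0))
      - ((if v ∈ N3 then (1:ℤ) else 0) - (if v ∈ N4 then 1 else 0)) with hc
  have hcS : ∀ v ∈ S, 1 ≤ c v := by
    intro v hv
    rw [hSdef, Finset.mem_sdiff, Finset.mem_sdiff] at hv
    rw [hc]
    simp only [hv.1.1, hv.1.2, hv.2, if_true, if_false]
    split <;> norm_num
  have hpred : ∀ W : Finset α,
      (((N1 ∩ W).card : ℤ) - ((N2 ∩ W).card : ℤ)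
        = ((N3 ∩ W).card : ℤ) - ((N4 ∩ W).card : ℤ)) ↔ (∑ v ∈ W, c v = 0) := by
    intro W
    have : ∑ v ∈ W, c v = (((N1 ∩ W).card : ℤ) - ((N2 ∩ W).card : ℤ))
        - (((N3 ∩ W).card : ℤ) - ((N4 ∩ W).card : ℤ)) := by
      simp_rw [hc, Finset.sum_sub_distrib, ← inter_card_as_sum]
    rw [this]
    constructor <;> intro h <;> linarith
  have hcount := collision_count c S hcS 0
  -- real bound on central binomial
  set s := S.card with hs
  have hsn : s ≤ n := Finset.card_le_univ S
  have hεn : (0:ℝ) < ε * n := by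
    have : (0:ℝ) < n := by exact_mod_cast hn
    positivity
  have hεs : ε * n ≤ (s:ℝ) := hS
  have hmid := mid_bound s
  have hCreal : ((s.choose (s/2) : ℝ)) ≤ Real.sqrt 2 / Real.sqrt (ε * n) * 2^s := by
    have h1 : ((s.choose (s/2) : ℝ))^2 * (s+1) ≤ 2 * 4^s := by
      have : (((s+1) * (s.choose (s/2))^2 : ℕ) : ℝ) ≤ ((2 * 4^s : ℕ) : ℝ) := by exact_mod_cast hmid
      push_cast at this
      linarith
    have h2 : ((s.choose (s/2) : ℝ))^2 ≤ 2 * 4^s / (ε * n) := by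
      rw [le_div_iff₀ hεn]
      calc ((s.choose (s/2) : ℝ))^2 * (ε * n) ≤ ((s.choose (s/2) : ℝ))^2 * (s+1) := by
            apply mul_le_mul_of_nonneg_left _ (sq_nonneg _)
            linarith
        _ ≤ 2 * 4^s := h1
    have hrhs : (0:ℝ) ≤ Real.sqrt 2 / Real.sqrt (ε * n) * 2^s := by positivity
    have h4 : ((2:ℝ)^s)^2 = 4^s := by
      rw [← pow_mul, mul_comm, pow_mul]; norm_num
    have h3 : (Real.sqrt 2 / Real.sqrt (ε * n) * 2^s)^2 = 2 * 4^s / (ε * n) := by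
      rw [mul_pow, div_pow, Real.sq_sqrt (by norm_num : (0:ℝ) ≤ 2),
        Real.sq_sqrt (le_of_lt hεn), h4]
      ring
    calc ((s.choose (s/2) : ℝ)) = Real.sqrt (((s.choose (s/2) : ℝ))^2) :=
          (Real.sqrt_sq (by positivity)).symm
      _ ≤ Real.sqrt ((Real.sqrt 2 / Real.sqrt (ε * n) * 2^s)^2) :=
          Real.sqrt_le_sqrt (by rw [h3]; exact h2)
      _ = Real.sqrt 2 / Real.sqrt (ε * n) * 2^s := Real.sqrt_sq hrhs
  have hfeq : Finset.univ.filter (fun W : Finset α =>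
      ((N1 ∩ W).card : ℤ) - ((N2 ∩ W).card : ℤ)
        = ((N3 ∩ W).card : ℤ) - ((N4 ∩ W).card : ℤ))
      = Finset.univ.filter (fun W : Finset α => ∑ v ∈ W, c v = 0) := by
    apply Finset.filter_congr
    intro W _
    exact hpred W
  rw [hfeq]
  have hcr : ((Finset.univ.filter (fun W : Finset α => ∑ v ∈ W, c v = 0)).card : ℝ)
      ≤ (2:ℝ)^(n - s) * (s.choose (s/2)) := by exact_mod_cast hcount
  calc ((Finset.univ.filter (fun W : Finset α => ∑ v ∈ W, c v = 0)).card : ℝ)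
      ≤ (2:ℝ)^(n - s) * (s.choose (s/2)) := hcr
    _ ≤ (2:ℝ)^(n - s) * (Real.sqrt 2 / Real.sqrt (ε * n) * 2^s) := by
        apply mul_le_mul_of_nonneg_left hCreal (by positivity)
    _ = Real.sqrt 2 / Real.sqrt (ε * n) * ((2:ℝ)^(n - s) * 2^s) := by ring
    _ = Real.sqrt 2 / Real.sqrt (ε * n) * 2^n := by
        rw [← pow_add, Nat.sub_add_cancel hsn]

lemma swap_count {β γ : Type} [Fintype β] [Fintype γ] (p : β → γ → Prop)
    [∀ i W, Decidable (p i W)] :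
    ∑ W : γ, ((Finset.univ.filter (fun i : β => p i W)).card : ℝ)
      = ∑ i : β, ((Finset.univ.filter (fun W : γ => p i W)).card : ℝ) := by
  simp_rw [Finset.card_filter]
  push_cast
  rw [Finset.sum_comm]

def nbr {V1 V2 : Type} [Fintype V2] (E : V1 → V2 → Prop) [∀ a b, Decidable (E a b)]
    (u : V1) : Finset V2 := Finset.univ.filter (fun v => E u v)

def IsPairMatching {V1 V2 : Type} [Fintype V2] [DecidableEq V2]
    (E : V1 → V2 → Prop) [∀ a b, Decidable (E a b)] (ε : ℝ) (k : ℕ)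
    (x y : Fin k → V1) : Prop :=
  (∀ i j : Fin k, x i ≠ y j) ∧
  (∀ i j : Fin k, i ≠ j → x i ≠ x j ∧ y i ≠ y j) ∧
  (∀ i : Fin k, (nbr E (y i)).card ≤ (nbr E (x i)).card ∧
      ((nbr E (x i)).card : ℝ) - ((nbr E (y i)).card : ℝ) ≤ Real.sqrt (Fintype.card V2)) ∧
  (∀ i j : Fin k, i ≠ j →
      ε * Fintype.card V2 ≤ (((nbr E (x i) \ nbr E (y i)) \ nbr E (x j)).card : ℝ) ∧
      ε * Fintype.card V2 ≤ (((nbr E (x i) \ nbr E (y i)) \ nbr E (y j)).card : ℝ))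

set_option maxHeartbeats 1000000 in
theorem stmt14 (ε : ℝ) (hε : 0 < ε) :
    ∃ δ : ℝ, 0 < δ ∧
      ∀ (V1 V2 : Type) [Fintype V1] [Fintype V2] [DecidableEq V2]
        (E : V1 → V2 → Prop) [∀ a b, Decidable (E a b)]
        (k : ℕ), k = Nat.sqrt (Fintype.card V2) →
        (Fintype.card V2 : ℝ) / 2 ≤ Fintype.card V1 →
        ∀ x y : Fin k → V1, IsPairMatching E ε k x y →
        (3 : ℝ) / 4 * 2 ^ (Fintype.card V2) ≤
          (((Finset.univ : Finset (Finset V2)).filter (fun W =>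
            δ * Real.sqrt (Fintype.card V2) ≤
              ((((Finset.univ : Finset (Fin k)).image (fun i =>
                    ((nbr E (x i) ∩ W).card : ℤ) - ((nbr E (y i) ∩ W).card : ℤ))).filter
                  (fun z : ℤ => ((|z| : ℤ) : ℝ) ≤ 3 * Real.sqrt (Fintype.card V2))).card : ℝ))).card : ℝ) := by
  have hC2pos : (0:ℝ) < 8 * Real.sqrt 2 / Real.sqrt ε := by positivity
  refine ⟨(17/25)^2 / (2 * (1 + 8 * Real.sqrt 2 / Real.sqrt ε)), by positivity, ?_⟩
  intro V1 V2 _ _ _ E _ k hk hV1 x y hPM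
  classical
  set C2 : ℝ := 8 * Real.sqrt 2 / Real.sqrt ε with hC2def
  set δ : ℝ := (17/25)^2 / (2 * (1 + C2)) with hδdef
  set n := Fintype.card V2 with hn
  -- trivial case n = 0
  rcases Nat.eq_zero_or_pos n with hn0 | hn1
  · have hfull : ((Finset.univ : Finset (Finset V2)).filter (fun W =>
        δ * Real.sqrt n ≤
          ((((Finset.univ : Finset (Fin k)).image (fun i =>
                ((nbr E (x i) ∩ W).card : ℤ) - ((nbr E (y i) ∩ W).card : ℤ))).filter
              (fun z : ℤ => ((|z| : ℤ) : ℝ) ≤ 3 * Real.sqrt n)).card : ℝ)))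
        = (Finset.univ : Finset (Finset V2)) := by
      apply Finset.filter_true_of_mem
      intro W _
      rw [hn0]
      push_cast
      rw [Real.sqrt_zero, mul_zero]
      positivity
    rw [hfull, Finset.card_univ, Fintype.card_finset]
    have : ((2:ℝ))^n ≤ 2^n := le_refl _
    push_cast
    nlinarith [pow_pos (by norm_num : (0:ℝ) < 2) n]
  -- main case
  obtain ⟨_, _, h3, h4⟩ := hPM
  have hk1 : 1 ≤ k := by
    rw [hk]
    exact Nat.one_le_iff_ne_zero.mpr (fun h => by
      have := Nat.sqrt_eq_zero.mp h
      omega)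
  have hkpos : (0:ℝ) < k := by exact_mod_cast hk1
  have hnR : (1:ℝ) ≤ n := by exact_mod_cast hn1
  -- k ≤ √n and √n ≤ 2k
  have hk_le : (k:ℝ) ≤ Real.sqrt n := by
    rw [hk]
    have h1 : ((Nat.sqrt n : ℝ))^2 ≤ n := by
      exact_mod_cast Nat.sqrt_le' n
    calc (Nat.sqrt n : ℝ) = Real.sqrt ((Nat.sqrt n : ℝ)^2) := (Real.sqrt_sq (by positivity)).symm
      _ ≤ Real.sqrt n := Real.sqrt_le_sqrt h1
  have hsqn_le : Real.sqrt n ≤ 2 * k := by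
    have h1 : n < (k+1)^2 := by rw [hk]; exact Nat.lt_succ_sqrt' n
    have h2n : n ≤ 4*k^2 := by nlinarith [h1, hk1]
    have h2 : (n:ℝ) ≤ (2*(k:ℝ))^2 := by
      have : (n:ℝ) ≤ 4*(k:ℝ)^2 := by exact_mod_cast h2n
      nlinarith
    calc Real.sqrt n ≤ Real.sqrt ((2*(k:ℝ))^2) := Real.sqrt_le_sqrt h2
      _ = 2*(k:ℝ) := Real.sqrt_sq (by positivity)
  set D : Fin k → Finset V2 → ℤ :=
    fun i W => ((nbr E (x i) ∩ W).card : ℤ) - ((nbr E (y i) ∩ W).card : ℤ) with hD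
  -- Step A
  have stepA : ∑ W : Finset V2,
      ((Finset.univ.filter (fun i : Fin k =>
        ¬ ((|D i W| : ℤ) : ℝ) ≤ 3 * Real.sqrt n)).card : ℝ) ≤ 2^n * k / 25 := by
    rw [swap_count (fun (i : Fin k) (W : Finset V2) => ¬ ((|D i W| : ℤ) : ℝ) ≤ 3 * Real.sqrt n)]
    have hper : ∀ i : Fin k,
        ((Finset.univ.filter (fun W : Finset V2 =>
          ¬ ((|D i W| : ℤ) : ℝ) ≤ 3 * Real.sqrt n)).card : ℝ) ≤ 2^n / 25 := by
      intro i
      have := cheb' (nbr E (x i)) (nbr E (y i)) (h3 i).1 (h3 i).2 hn1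
      rw [hD]
      linarith
    calc ∑ i : Fin k, ((Finset.univ.filter (fun W : Finset V2 =>
          ¬ ((|D i W| : ℤ) : ℝ) ≤ 3 * Real.sqrt n)).card : ℝ)
        ≤ ∑ _i : Fin k, (2:ℝ)^n / 25 := Finset.sum_le_sum (fun i _ => hper i)
      _ = k * ((2:ℝ)^n / 25) := by rw [Finset.sum_const, Finset.card_univ, Fintype.card_fin]; simp
      _ = 2^n * k / 25 := by ring
  -- Step B
  have stepB : ∑ W : Finset V2,
      (((Finset.univ ×ˢ Finset.univ).filter (fun p : Fin k × Fin k =>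
        p.1 ≠ p.2 ∧ D p.1 W = D p.2 W)).card : ℝ) ≤ C2 / 8 * k * 2^n := by
    simp_rw [Finset.univ_product_univ]
    rw [swap_count (fun (p : Fin k × Fin k) (W : Finset V2) => p.1 ≠ p.2 ∧ D p.1 W = D p.2 W)]
    have hper : ∀ p : Fin k × Fin k,
        ((Finset.univ.filter (fun W : Finset V2 =>
          p.1 ≠ p.2 ∧ D p.1 W = D p.2 W)).card : ℝ)
          ≤ Real.sqrt 2 / Real.sqrt (ε * n) * 2^n := by
      intro p
      by_cases hp : p.1 = p.2
      · have hempty : Finset.univ.filter (fun W : Finset V2 =>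
            p.1 ≠ p.2 ∧ D p.1 W = D p.2 W) = ∅ :=
          Finset.filter_false_of_mem (fun W _ => by simp [hp])
        rw [hempty]
        simp only [Finset.card_empty, Nat.cast_zero]
        positivity
      · have heq : Finset.univ.filter (fun W : Finset V2 =>
            p.1 ≠ p.2 ∧ D p.1 W = D p.2 W)
            = Finset.univ.filter (fun W : Finset V2 => D p.1 W = D p.2 W) :=
          Finset.filter_congr (fun W _ => by simp [hp])
        rw [heq]
        exact coll' ε hε (nbr E (x p.1)) (nbr E (y p.1)) (nbr E (x p.2)) (nbr E (y p.2))
          hn1 (h4 p.1 p.2 hp).1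
    have hsum : ∑ p : Fin k × Fin k, ((Finset.univ.filter (fun W : Finset V2 =>
        p.1 ≠ p.2 ∧ D p.1 W = D p.2 W)).card : ℝ)
        ≤ (k:ℝ)^2 * (Real.sqrt 2 / Real.sqrt (ε * n) * 2^n) := by
      calc ∑ p : Fin k × Fin k, ((Finset.univ.filter (fun W : Finset V2 =>
            p.1 ≠ p.2 ∧ D p.1 W = D p.2 W)).card : ℝ)
          ≤ ∑ _p : Fin k × Fin k, Real.sqrt 2 / Real.sqrt (ε * n) * 2^n :=
            Finset.sum_le_sum (fun p _ => hper p)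
        _ = (k:ℝ)^2 * (Real.sqrt 2 / Real.sqrt (ε * n) * 2^n) := by
            rw [Finset.sum_const, Finset.card_univ, Fintype.card_prod, Fintype.card_fin,
              nsmul_eq_mul]
            push_cast
            ring
    refine le_trans hsum ?_
    -- k^2 * (√2/√(εn) * 2^n) ≤ C2/8 * k * 2^n
    have hsε : (0:ℝ) < Real.sqrt ε := Real.sqrt_pos.mpr hε
    have hsn : (0:ℝ) < Real.sqrt n := Real.sqrt_pos.mpr (by exact_mod_cast hn1)
    have hsplit : Real.sqrt (ε * n) = Real.sqrt ε * Real.sqrt n := Real.sqrt_mul hε.le n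
    have hC28 : C2 / 8 = Real.sqrt 2 / Real.sqrt ε := by rw [hC2def]; ring
    rw [hsplit, hC28]
    have hkey : (k:ℝ)^2 / Real.sqrt n ≤ k := by
      rw [div_le_iff₀ hsn]
      calc (k:ℝ)^2 = k * k := sq (k:ℝ)
        _ ≤ k * Real.sqrt n := by
          apply mul_le_mul_of_nonneg_left hk_le (le_of_lt hkpos)
    have h2pos : (0:ℝ) < 2^n := by positivity
    have hs2 : (0:ℝ) < Real.sqrt 2 := by positivity
    calc (k:ℝ)^2 * (Real.sqrt 2 / (Real.sqrt ε * Real.sqrt n) * 2^n)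
        = (Real.sqrt 2 / Real.sqrt ε) * ((k:ℝ)^2 / Real.sqrt n) * 2^n := by
          field_simp
      _ ≤ (Real.sqrt 2 / Real.sqrt ε) * k * 2^n := by
          apply mul_le_mul_of_nonneg_right _ h2pos.le
          apply mul_le_mul_of_nonneg_left hkey (by positivity)
  -- Markov: bad sets
  set bad1 := Finset.univ.filter (fun W : Finset V2 =>
    (8:ℝ)/25 * k < ((Finset.univ.filter (fun i : Fin k =>
      ¬ ((|D i W| : ℤ) : ℝ) ≤ 3 * Real.sqrt n)).card : ℝ)) with hbad1
  set bad2 := Finset.univ.filter (fun W : Finset V2 =>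
    C2 * k < (((Finset.univ ×ˢ Finset.univ).filter (fun p : Fin k × Fin k =>
      p.1 ≠ p.2 ∧ D p.1 W = D p.2 W)).card : ℝ)) with hbad2
  have hb1 : (bad1.card : ℝ) ≤ 2^n / 8 := by
    have hmark : (bad1.card : ℝ) * ((8:ℝ)/25 * k)
        ≤ ∑ W : Finset V2, ((Finset.univ.filter (fun i : Fin k =>
          ¬ ((|D i W| : ℤ) : ℝ) ≤ 3 * Real.sqrt n)).card : ℝ) := by
      calc (bad1.card : ℝ) * ((8:ℝ)/25 * k)
          ≤ ∑ W ∈ bad1, ((Finset.univ.filter (fun i : Fin k =>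
            ¬ ((|D i W| : ℤ) : ℝ) ≤ 3 * Real.sqrt n)).card : ℝ) := by
            have := Finset.card_nsmul_le_sum bad1
              (fun W => ((Finset.univ.filter (fun i : Fin k =>
                ¬ ((|D i W| : ℤ) : ℝ) ≤ 3 * Real.sqrt n)).card : ℝ)) ((8:ℝ)/25 * k)
              (fun W hW => le_of_lt (by
                rw [hbad1, Finset.mem_filter] at hW
                exact hW.2))
            simpa [nsmul_eq_mul] using this
        _ ≤ ∑ W : Finset V2, _ := Finset.sum_le_sum_of_subset_of_nonneg
            (Finset.subset_univ bad1) (fun W _ _ => Nat.cast_nonneg _)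
    nlinarith [stepA, hkpos, hmark]
  have hb2 : (bad2.card : ℝ) ≤ 2^n / 8 := by
    have hmark : (bad2.card : ℝ) * (C2 * k)
        ≤ ∑ W : Finset V2, (((Finset.univ ×ˢ Finset.univ).filter (fun p : Fin k × Fin k =>
          p.1 ≠ p.2 ∧ D p.1 W = D p.2 W)).card : ℝ) := by
      calc (bad2.card : ℝ) * (C2 * k)
          ≤ ∑ W ∈ bad2, (((Finset.univ ×ˢ Finset.univ).filter (fun p : Fin k × Fin k =>
            p.1 ≠ p.2 ∧ D p.1 W = D p.2 W)).card : ℝ) := by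
            have := Finset.card_nsmul_le_sum bad2
              (fun W => (((Finset.univ ×ˢ Finset.univ).filter (fun p : Fin k × Fin k =>
                p.1 ≠ p.2 ∧ D p.1 W = D p.2 W)).card : ℝ)) (C2 * k)
              (fun W hW => le_of_lt (by
                rw [hbad2, Finset.mem_filter] at hW
                exact hW.2))
            simpa [nsmul_eq_mul] using this
        _ ≤ ∑ W : Finset V2, _ := Finset.sum_le_sum_of_subset_of_nonneg
            (Finset.subset_univ bad2) (fun W _ _ => Nat.cast_nonneg _)
    nlinarith [stepB, hkpos, hmark, hC2pos, mul_pos hC2pos hkpos]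
  -- good W analysis
  have hgood : ∀ W : Finset V2, W ∉ bad1 → W ∉ bad2 →
      δ * Real.sqrt n ≤
        ((((Finset.univ : Finset (Fin k)).image (fun i =>
            ((nbr E (x i) ∩ W).card : ℤ) - ((nbr E (y i) ∩ W).card : ℤ))).filter
          (fun z : ℤ => ((|z| : ℤ) : ℝ) ≤ 3 * Real.sqrt n)).card : ℝ) := by
    intro W hW1 hW2
    rw [hbad1, Finset.mem_filter] at hW1
    rw [hbad2, Finset.mem_filter] at hW2
    simp only [Finset.mem_univ, true_and, not_lt] at hW1 hW2
    have hdv := distinct_values k (fun i => D i W) (3 * Real.sqrt n) C2 hW1 hW2 hk1 hC2pos.le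
    have h1C2 : (0:ℝ) < 1 + C2 := by linarith
    have hδk : δ * Real.sqrt n ≤ (17/25)^2 / (1 + C2) * k := by
      rw [hδdef]
      rw [div_mul_eq_mul_div, div_mul_eq_mul_div, div_le_div_iff₀ (by positivity) h1C2]
      nlinarith [hsqn_le, h1C2]
    calc δ * Real.sqrt n ≤ (17/25)^2 / (1 + C2) * k := hδk
      _ ≤ _ := hdv
  -- final counting
  have hsubset : Finset.univ \ (bad1 ∪ bad2) ⊆
      (Finset.univ : Finset (Finset V2)).filter (fun W =>
        δ * Real.sqrt n ≤
          ((((Finset.univ : Finset (Fin k)).image (fun i =>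
              ((nbr E (x i) ∩ W).card : ℤ) - ((nbr E (y i) ∩ W).card : ℤ))).filter
            (fun z : ℤ => ((|z| : ℤ) : ℝ) ≤ 3 * Real.sqrt n)).card : ℝ)) := by
    intro W hW
    rw [Finset.mem_sdiff, Finset.mem_union] at hW
    push_neg at hW
    exact Finset.mem_filter.mpr ⟨Finset.mem_univ W, hgood W hW.2.1 hW.2.2⟩
  have hcard_univ : (Finset.univ : Finset (Finset V2)).card = 2^n := by
    rw [Finset.card_univ, Fintype.card_finset]
  have hle : (bad1 ∪ bad2).card ≤ 2^n := by
    rw [← hcard_univ]; exact Finset.card_le_univ _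
  have hsd : ((Finset.univ \ (bad1 ∪ bad2)).card : ℝ) = 2^n - ((bad1 ∪ bad2).card : ℝ) := by
    rw [Finset.card_sdiff_of_subset (Finset.subset_univ _), hcard_univ, Nat.cast_sub hle]
    push_cast
    ring
  have hcu : ((bad1 ∪ bad2).card : ℝ) ≤ (bad1.card : ℝ) + bad2.card := by
    exact_mod_cast Finset.card_union_le bad1 bad2
  have hmono : ((Finset.univ \ (bad1 ∪ bad2)).card : ℝ) ≤
      (((Finset.univ : Finset (Finset V2)).filter (fun W =>
        δ * Real.sqrt n ≤
          ((((Finset.univ : Finset (Fin k)).image (fun i =>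
              ((nbr E (x i) ∩ W).card : ℤ) - ((nbr E (y i) ∩ W).card : ℤ))).filter
            (fun z : ℤ => ((|z| : ℤ) : ℝ) ≤ 3 * Real.sqrt n)).card : ℝ))).card : ℝ) := by
    exact_mod_cast Finset.card_le_card hsubset
  linarith [hb1, hb2, hsd, hcu, hmono]
end

section
/- For every natural number d > 1 and ε > 0 there exist L, D > 0 such that the following holds. Let G = (V1, V2, E) be a bipartite graph and let u₁, …, u_L ∈ V1 be vertices such that the sets S_i = N(u_i) \ ∪_{j<i} N(u_j) satisfy |S_i| ≥ D for all i ∈ [L]. If W is a uniformly random subset of V2, then with probability at least 1 − ε, for every pair (k, m) with 0 ≤ k ≤ m and 2 ≤ m ≤ d there exists i ∈ [L] with d^W(u_i) ≡ k (mod m). -/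
open Finset

lemma step_lemma {V2 : Type} [Fintype V2] [DecidableEq V2] (F : Finset V2)
    (B B' : Finset (Finset V2)) (hsub : B' ⊆ B)
    (hclosed : ∀ W ∈ B, ∀ A ⊆ F, (W \ F) ∪ A ∈ B)
    (hmiss : ∀ W ∈ B', ∃ A ⊆ F, (W \ F) ∪ A ∉ B') :
    B'.card * 2 ^ F.card ≤ B.card * (2 ^ F.card - 1) := by
  classical
  have hkey : ∀ W : Finset V2, ∀ A ⊆ F, ((W \ F) ∪ A) ∩ F = A := by
    intro W A hA
    ext v
    simp only [mem_inter, mem_union, mem_sdiff]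
    constructor
    · rintro ⟨(⟨_, h2⟩ | h2), h3⟩
      · exact absurd h3 h2
      · exact h2
    · exact fun h => ⟨Or.inr h, hA h⟩
  have hsd : ∀ W : Finset V2, ∀ A ⊆ F, ((W \ F) ∪ A) \ F = W \ F := by
    intro W A hA
    rw [union_sdiff_distrib, Finset.sdiff_idem _ _, sdiff_eq_empty_iff_subset.2 hA, union_empty]
  have hinj : ∀ W : Finset V2, Set.InjOn (fun A => (W \ F) ∪ A) F.powerset := by
    intro W A hA A' hA' h
    have hA := mem_powerset.1 (by exact_mod_cast hA)
    have hA' := mem_powerset.1 (by exact_mod_cast hA')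
    simp only [] at h
    rw [← hkey W A hA, ← hkey W A' hA', h]
  -- upper bound on B' fibers
  have hupper : ∀ Y ∈ B'.image (· \ F),
      (B'.filter (fun W => W \ F = Y)).card ≤ 2 ^ F.card - 1 := by
    intro Y hY
    obtain ⟨W, hW, rfl⟩ := mem_image.1 hY
    obtain ⟨A₀, hA₀F, hA₀⟩ := hmiss W hW
    have hmem : (W \ F) ∪ A₀ ∈ F.powerset.image (fun A => (W \ F) ∪ A) :=
      mem_image.2 ⟨A₀, mem_powerset.2 hA₀F, rfl⟩
    have hss : B'.filter (fun X => X \ F = W \ F) ⊆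
        (F.powerset.image (fun A => (W \ F) ∪ A)).erase ((W \ F) ∪ A₀) := by
      intro X hX
      obtain ⟨hX1, hX2⟩ := mem_filter.1 hX
      refine mem_erase.2 ⟨?_, ?_⟩
      · rintro rfl; exact hA₀ hX1
      · refine mem_image.2 ⟨X ∩ F, mem_powerset.2 inter_subset_right, ?_⟩
        rw [← hX2, sdiff_union_inter]
    calc (B'.filter (fun X => X \ F = W \ F)).card
        ≤ ((F.powerset.image (fun A => (W \ F) ∪ A)).erase ((W \ F) ∪ A₀)).card :=
          card_le_card hss
      _ = (F.powerset.image (fun A => (W \ F) ∪ A)).card - 1 := card_erase_of_mem hmem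
      _ = 2 ^ F.card - 1 := by
          rw [card_image_of_injOn (hinj W), card_powerset]
  -- lower bound on B fibers
  have hlower : ∀ Y ∈ B'.image (· \ F),
      2 ^ F.card ≤ (B.filter (fun W => W \ F = Y)).card := by
    intro Y hY
    obtain ⟨W, hW, rfl⟩ := mem_image.1 hY
    have hW' : W ∈ B := hsub hW
    have hss : F.powerset.image (fun A => (W \ F) ∪ A) ⊆
        B.filter (fun X => X \ F = W \ F) := by
      intro X hX
      obtain ⟨A, hA, rfl⟩ := mem_image.1 hX
      have hA := mem_powerset.1 hA
      exact mem_filter.2 ⟨hclosed W hW' A hA, hsd W A hA⟩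
    calc (2 : ℕ) ^ F.card = (F.powerset.image (fun A => (W \ F) ∪ A)).card := by
          rw [card_image_of_injOn (hinj W), card_powerset]
      _ ≤ _ := card_le_card hss
  have hB' : B'.card ≤ (B'.image (· \ F)).card * (2 ^ F.card - 1) := by
    rw [card_eq_sum_card_fiberwise (f := (· \ F)) (t := B'.image (· \ F))
      (fun x hx => mem_image_of_mem _ hx)]
    exact Finset.sum_le_card_nsmul _ _ _ hupper
  have hB : (B'.image (· \ F)).card * 2 ^ F.card ≤ B.card := by
    rw [card_eq_sum_card_fiberwise (fun x (hx : x ∈ B) => mem_image_of_mem (· \ F) hx)]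
    calc (B'.image (· \ F)).card * 2 ^ F.card
        ≤ ∑ Y ∈ B'.image (· \ F), (B.filter (fun W => W \ F = Y)).card :=
          Finset.card_nsmul_le_sum _ _ _ hlower
      _ ≤ _ := Finset.sum_le_sum_of_subset (image_subset_image hsub)
  calc B'.card * 2 ^ F.card
      ≤ ((B'.image (· \ F)).card * (2 ^ F.card - 1)) * 2 ^ F.card :=
        Nat.mul_le_mul_right _ hB'
    _ = ((B'.image (· \ F)).card * 2 ^ F.card) * (2 ^ F.card - 1) := by ring
    _ ≤ B.card * (2 ^ F.card - 1) := Nat.mul_le_mul_right _ hB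

lemma iter_lemma {V2 : Type} [Fintype V2] [DecidableEq V2] {L : ℕ}
    (N : Fin L → Finset V2) (F : Fin L → Finset V2) (c k m : ℕ) (hm : 0 < m)
    (hc : c + 1 = m)
    (hFN : ∀ i, F i ⊆ N i) (hFc : ∀ i, (F i).card = c)
    (hfresh : ∀ i j : Fin L, i < j → Disjoint (N i) (F j)) :
    ∀ t, t ≤ L →
      ((univ.filter (fun W : Finset V2 =>
          ∀ i : Fin L, i.val < t → (N i ∩ W).card % m ≠ k % m)).card) * (2 ^ c) ^ t ≤
        ((2 ^ c - 1) ^ t) * 2 ^ (Fintype.card V2) := by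
  classical
  intro t
  induction t with
  | zero =>
    intro _
    simp [Finset.card_univ, Fintype.card_finset]
  | succ t ih =>
    intro ht
    have htL : t < L := ht
    set i' : Fin L := ⟨t, htL⟩ with hi'
    set B := univ.filter (fun W : Finset V2 =>
        ∀ i : Fin L, i.val < t → (N i ∩ W).card % m ≠ k % m) with hB
    set B' := univ.filter (fun W : Finset V2 =>
        ∀ i : Fin L, i.val < t + 1 → (N i ∩ W).card % m ≠ k % m) with hB'
    have hdisj : ∀ (v : V2) (i : Fin L), i.val < t → v ∈ N i → v ∉ F i' := by
      intro v i hi hv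
      exact Finset.disjoint_left.1 (hfresh i i' (by exact hi)) hv
    have hsame : ∀ (W A : Finset V2), A ⊆ F i' → ∀ i : Fin L, i.val < t →
        N i ∩ ((W \ F i') ∪ A) = N i ∩ W := by
      intro W A hA i hi
      ext v
      simp only [mem_inter, mem_union, mem_sdiff]
      constructor
      · rintro ⟨h1, (⟨h2, _⟩ | h2)⟩
        · exact ⟨h1, h2⟩
        · exact absurd (hA h2) (hdisj v i hi h1)
      · rintro ⟨h1, h2⟩
        exact ⟨h1, Or.inl ⟨h2, hdisj v i hi h1⟩⟩
    have hstep : B'.card * 2 ^ (F i').card ≤ B.card * (2 ^ (F i').card - 1) := by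
      apply step_lemma
      · intro W hW
        simp only [hB, hB', mem_filter, mem_univ, true_and] at hW ⊢
        exact fun i hi => hW i (by omega)
      · intro W hW A hA
        simp only [hB, mem_filter, mem_univ, true_and] at hW ⊢
        intro i hi
        rw [hsame W A hA i hi]
        exact hW i hi
      · intro W hW
        simp only [hB', mem_filter, mem_univ, true_and] at hW
        set r := (N i' ∩ (W \ F i')).card with hr
        have hrm : r % m < m := Nat.mod_lt _ hm
        set a := (k + m - r % m) % m with ha
        have ham : a < m := Nat.mod_lt _ hm
        obtain ⟨A, hAF, hAcard⟩ := Finset.exists_subset_card_eq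
          (show a ≤ (F i').card by rw [hFc]; omega)
        refine ⟨A, hAF, ?_⟩
        have hAN : A ⊆ N i' := hAF.trans (hFN i')
        have hNW : N i' ∩ ((W \ F i') ∪ A) = (N i' ∩ (W \ F i')) ∪ A := by
          ext v
          simp only [mem_inter, mem_union, mem_sdiff]
          constructor
          · rintro ⟨h1, (h2 | h2)⟩
            · exact Or.inl ⟨h1, h2⟩
            · exact Or.inr h2
          · rintro (⟨h1, h2⟩ | h1)
            · exact ⟨h1, Or.inl h2⟩
            · exact ⟨hAN h1, Or.inr h1⟩
        have hdisj2 : Disjoint (N i' ∩ (W \ F i')) A := by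
          refine Finset.disjoint_left.2 ?_
          intro v hv hvA
          exact (mem_sdiff.1 (mem_inter.1 hv).2).2 (hAF hvA)
        have hcardNW : (N i' ∩ ((W \ F i') ∪ A)).card = r + a := by
          rw [hNW, card_union_of_disjoint hdisj2, hAcard]
        have hmod : (r + a) % m = k % m := by
          have h1 : r % m + (k + m - r % m) = k + m := by omega
          rw [Nat.add_mod, Nat.mod_eq_of_lt ham, ha, Nat.add_mod_mod, h1,
            Nat.add_mod_right]
        intro hmem
        simp only [hB', mem_filter, mem_univ, true_and] at hmem
        exact hmem i' (Nat.lt_succ_self t) (by rw [hcardNW, hmod])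
    have hFci' : (F i').card = c := hFc i'
    rw [hFci'] at hstep
    calc B'.card * (2 ^ c) ^ (t + 1)
        = (B'.card * 2 ^ c) * (2 ^ c) ^ t := by ring
      _ ≤ (B.card * (2 ^ c - 1)) * (2 ^ c) ^ t := Nat.mul_le_mul_right _ hstep
      _ = (B.card * (2 ^ c) ^ t) * (2 ^ c - 1) := by ring
      _ ≤ ((2 ^ c - 1) ^ t * 2 ^ (Fintype.card V2)) * (2 ^ c - 1) :=
          Nat.mul_le_mul_right _ (ih (by omega))
      _ = (2 ^ c - 1) ^ (t + 1) * 2 ^ (Fintype.card V2) := by ring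

open scoped Classical in
theorem stmt15 (d : ℕ) (hd : 1 < d) (ε : ℝ) (hε : 0 < ε) :
    ∃ L D : ℕ, 0 < L ∧ 0 < D ∧
      ∀ (V1 V2 : Type) [Fintype V1] [Fintype V2] [DecidableEq V2]
        (E : V1 → V2 → Prop) [∀ a b, Decidable (E a b)]
        (u : Fin L → V1),
        (∀ i : Fin L, D ≤ ((nbr E (u i)) \
            (Finset.univ.filter (fun j : Fin L => j < i)).biUnion
              (fun j => nbr E (u j))).card) →
        (1 - ε) * 2 ^ (Fintype.card V2) ≤
          (((Finset.univ : Finset (Finset V2)).filter (fun W =>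
              ∀ k m : ℕ, k ≤ m → 2 ≤ m → m ≤ d →
                ∃ i : Fin L, (nbr E (u i) ∩ W).card % m = k % m)).card : ℝ) := by
  classical
  set ρ : ℝ := 1 - 1 / 2 ^ (d - 1) with hρdef
  have h2pos : (0:ℝ) < 2 ^ (d - 1) := by positivity
  have h2ge1 : (1:ℝ) ≤ 2 ^ (d - 1) := one_le_pow₀ one_le_two
  have hρ0 : 0 ≤ ρ := by
    rw [hρdef, sub_nonneg, div_le_one h2pos]
    exact h2ge1
  have hρ1 : ρ < 1 := by
    rw [hρdef, sub_lt_self_iff]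
    positivity
  have hdpos : (0:ℝ) < ((d:ℝ) + 1) ^ 2 := by positivity
  obtain ⟨n0, hn0⟩ := exists_pow_lt_of_lt_one (div_pos hε hdpos) hρ1
  refine ⟨n0 + 1, d, Nat.succ_pos _, by omega, ?_⟩
  intro V1 V2 _ _ _ E _ u hcard
  set n2 := Fintype.card V2 with hn2
  -- per pair bound
  have key : ∀ k m : ℕ, k ≤ m → 2 ≤ m → m ≤ d →
      ((univ.filter (fun W : Finset V2 =>
          ∀ i : Fin (n0+1), (nbr E (u i) ∩ W).card % m ≠ k % m)).card : ℝ)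
        ≤ ρ ^ (n0+1) * 2 ^ n2 := by
    intro k m hkm h2m hmd
    have hm0 : 0 < m := by omega
    have hSc : ∀ i : Fin (n0+1), m - 1 ≤ ((nbr E (u i)) \
        ((univ.filter (fun j : Fin (n0+1) => j < i)).biUnion
          (fun j => nbr E (u j)))).card := fun i => le_trans (by omega) (hcard i)
    choose F hFS hFcard using fun i => Finset.exists_subset_card_eq (hSc i)
    have hFN : ∀ i, F i ⊆ nbr E (u i) := fun i => (hFS i).trans sdiff_subset
    have hfresh : ∀ i j : Fin (n0+1), i < j → Disjoint (nbr E (u i)) (F j) := by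
      intro i j hij
      refine Finset.disjoint_right.2 ?_
      intro v hv hvN
      have h := mem_sdiff.1 (hFS j hv)
      exact h.2 (mem_biUnion.2 ⟨i, mem_filter.2 ⟨mem_univ _, hij⟩, hvN⟩)
    have hiter := iter_lemma (fun i => nbr E (u i)) F (m-1) k m hm0 (by omega)
      hFN hFcard hfresh (n0+1) le_rfl
    have heq : (univ.filter (fun W : Finset V2 =>
        ∀ i : Fin (n0+1), i.val < n0+1 → (nbr E (u i) ∩ W).card % m ≠ k % m))
        = (univ.filter (fun W : Finset V2 =>
            ∀ i : Fin (n0+1), (nbr E (u i) ∩ W).card % m ≠ k % m)) := by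
      apply filter_congr
      intro W _
      constructor
      · exact fun h i => h i i.isLt
      · exact fun h i _ => h i
    rw [heq] at hiter
    set B := (univ.filter (fun W : Finset V2 =>
        ∀ i : Fin (n0+1), (nbr E (u i) ∩ W).card % m ≠ k % m)).card with hBdef
    have h1le : (1:ℕ) ≤ 2 ^ (m-1) := Nat.one_le_two_pow
    have hiterR : (B:ℝ) * ((2:ℝ) ^ (m-1)) ^ (n0+1) ≤
        ((2:ℝ) ^ (m-1) - 1) ^ (n0+1) * 2 ^ n2 := by
      have := (Nat.cast_le (α := ℝ)).2 hiter
      push_cast [Nat.cast_sub h1le] at this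
      convert this using 2 <;> push_cast <;> ring
    have hxpos : (0:ℝ) < 2 ^ (m-1) := by positivity
    have hx1 : (1:ℝ) ≤ 2 ^ (m-1) := one_le_pow₀ one_le_two
    have hBle : (B:ℝ) ≤ (((2:ℝ) ^ (m-1) - 1) / 2 ^ (m-1)) ^ (n0+1) * 2 ^ n2 := by
      rw [div_pow, div_mul_eq_mul_div, le_div_iff₀ (by positivity)]
      exact hiterR
    have hfrac : ((2:ℝ) ^ (m-1) - 1) / 2 ^ (m-1) = 1 - 1 / 2 ^ (m-1) := by
      field_simp
    have hmono : (1:ℝ) - 1 / 2 ^ (m-1) ≤ ρ := by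
      rw [hρdef, sub_le_sub_iff_left]
      apply one_div_le_one_div_of_le (by positivity)
      exact pow_le_pow_right₀ one_le_two (by omega)
    have hnonneg : (0:ℝ) ≤ 1 - 1 / 2 ^ (m-1) := by
      rw [sub_nonneg, div_le_one hxpos]; exact hx1
    calc (B:ℝ) ≤ (((2:ℝ) ^ (m-1) - 1) / 2 ^ (m-1)) ^ (n0+1) * 2 ^ n2 := hBle
      _ = ((1:ℝ) - 1 / 2 ^ (m-1)) ^ (n0+1) * 2 ^ n2 := by rw [hfrac]
      _ ≤ ρ ^ (n0+1) * 2 ^ n2 := by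
          apply mul_le_mul_of_nonneg_right _ (by positivity)
          exact pow_le_pow_left₀ hnonneg hmono _
  -- union bound
  set P : Finset V2 → Prop := fun W =>
    ∀ k m : ℕ, k ≤ m → 2 ≤ m → m ≤ d →
      ∃ i : Fin (n0+1), (nbr E (u i) ∩ W).card % m = k % m with hPdef
  set pairs := ((range (d+1)) ×ˢ (range (d+1))).filter
    (fun p => p.1 ≤ p.2 ∧ 2 ≤ p.2 ∧ p.2 ≤ d) with hpairsdef
  have hbadsub : univ.filter (fun W => ¬ P W) ⊆ pairs.biUnion (fun p =>
      univ.filter (fun W : Finset V2 =>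
        ∀ i : Fin (n0+1), (nbr E (u i) ∩ W).card % p.2 ≠ p.1 % p.2)) := by
    intro W hW
    simp only [mem_filter, mem_univ, true_and, hPdef] at hW
    push_neg at hW
    obtain ⟨k, m, hkm, h2m, hmd, hall⟩ := hW
    refine mem_biUnion.2 ⟨(k, m), ?_, mem_filter.2 ⟨mem_univ _, hall⟩⟩
    exact mem_filter.2 ⟨mem_product.2 ⟨mem_range.2 (by omega), mem_range.2 (by omega)⟩,
      hkm, h2m, hmd⟩
  have hpairscard : pairs.card ≤ (d+1)^2 := by
    calc pairs.card ≤ ((range (d+1)) ×ˢ (range (d+1))).card := card_filter_le _ _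
      _ = (d+1)^2 := by rw [card_product, card_range]; ring
  have hbadcard : ((univ.filter (fun W => ¬ P W)).card : ℝ) ≤
      ((d:ℝ)+1)^2 * (ρ ^ (n0+1) * 2 ^ n2) := by
    have h1 : (univ.filter (fun W => ¬ P W)).card ≤
        ∑ p ∈ pairs, (univ.filter (fun W : Finset V2 =>
          ∀ i : Fin (n0+1), (nbr E (u i) ∩ W).card % p.2 ≠ p.1 % p.2)).card :=
      le_trans (card_le_card hbadsub) (card_biUnion_le)
    calc ((univ.filter (fun W => ¬ P W)).card : ℝ)
        ≤ ∑ p ∈ pairs, ((univ.filter (fun W : Finset V2 =>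
            ∀ i : Fin (n0+1), (nbr E (u i) ∩ W).card % p.2 ≠ p.1 % p.2)).card : ℝ) := by
          exact_mod_cast h1
      _ ≤ ∑ _p ∈ pairs, ρ ^ (n0+1) * 2 ^ n2 := by
          apply Finset.sum_le_sum
          intro p hp
          have hp' := mem_filter.1 hp
          exact key p.1 p.2 hp'.2.1 hp'.2.2.1 hp'.2.2.2
      _ = (pairs.card : ℝ) * (ρ ^ (n0+1) * 2 ^ n2) := by
          rw [Finset.sum_const, nsmul_eq_mul]
      _ ≤ ((d:ℝ)+1)^2 * (ρ ^ (n0+1) * 2 ^ n2) := by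
          apply mul_le_mul_of_nonneg_right _ (by positivity)
          exact_mod_cast hpairscard
  have hsplit : (univ.filter P).card + (univ.filter (fun W => ¬ P W)).card
      = 2 ^ n2 := by
    rw [Finset.card_filter_add_card_filter_not, card_univ, Fintype.card_finset]
  have hεbound : ((d:ℝ)+1)^2 * (ρ ^ (n0+1) * 2 ^ n2) ≤ ε * 2 ^ n2 := by
    have hρL : ρ ^ (n0+1) ≤ ρ ^ n0 := by
      rw [pow_succ]
      exact mul_le_of_le_one_right (pow_nonneg hρ0 _) (le_of_lt hρ1)
    have h2 : ρ ^ (n0+1) < ε / ((d:ℝ)+1)^2 := lt_of_le_of_lt hρL hn0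
    have h3 : ((d:ℝ)+1)^2 * ρ ^ (n0+1) ≤ ε := by
      rw [mul_comm]
      exact le_of_lt ((lt_div_iff₀ hdpos).1 h2)
    have h4 : (0:ℝ) ≤ 2 ^ n2 := by positivity
    calc ((d:ℝ)+1)^2 * (ρ ^ (n0+1) * 2 ^ n2)
        = (((d:ℝ)+1)^2 * ρ ^ (n0+1)) * 2 ^ n2 := by ring
      _ ≤ ε * 2 ^ n2 := mul_le_mul_of_nonneg_right h3 h4
  have hfinal : ((univ.filter P).card : ℝ) ≥ (1 - ε) * 2 ^ n2 := by
    have hcast : ((univ.filter P).card : ℝ) + ((univ.filter (fun W => ¬ P W)).card : ℝ)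
        = 2 ^ n2 := by exact_mod_cast hsplit
    linarith [le_trans hbadcard hεbound]
  exact hfinal
end

section
/- Let G = (V1, V2, E) be a C-bipartite-Ramsey graph with |V1| ≥ |V2|, |V2| sufficiently large, and C > 1. Let W ⊆ V2 with |W| = 2C·log₂|V2|. Then there is a subset U ⊆ V1 with |U| ≥ |V1|·2^{−|W|} such that all vertices of U have identical neighbourhoods in W; consequently |V1| ≤ |V2|^{O_C(1)}, i.e. the part sizes of a C-bipartite-Ramsey graph are polynomially related. -/
open Finset

def BipRamsey {V1 V2 : Type} [Fintype V1] [Fintype V2] (E : V1 → V2 → Prop) (C : ℝ) : Prop :=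
  ∀ (A : Finset V1) (B : Finset V2),
    C * Real.logb 2 (Fintype.card V1) ≤ A.card →
    C * Real.logb 2 (Fintype.card V2) ≤ B.card →
    ¬ ((∀ a ∈ A, ∀ b ∈ B, E a b) ∨ (∀ a ∈ A, ∀ b ∈ B, ¬ E a b))

lemma pigeon {V1 V2 : Type} [Fintype V1] [Fintype V2] (E : V1 → V2 → Prop)
    [∀ a b, Decidable (E a b)] (W : Finset V2) :
    ∃ U : Finset V1, Fintype.card V1 ≤ 2 ^ W.card * U.card ∧
      ∀ u ∈ U, ∀ u' ∈ U, ∀ w ∈ W, (E u w ↔ E u' w) := by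
  classical
  set f : V1 → Finset V2 := fun u => W.filter (fun w => E u w) with hf
  obtain ⟨S, hS, hmax⟩ := Finset.exists_max_image W.powerset
    (fun S => (univ.filter fun u => f u = S).card) ⟨∅, Finset.empty_mem_powerset _⟩
  refine ⟨univ.filter fun u => f u = S, ?_, ?_⟩
  · have h1 : Fintype.card V1 = ∑ T ∈ W.powerset, (univ.filter fun u => f u = T).card :=
      Finset.card_eq_sum_card_fiberwise (fun u _ => Finset.mem_powerset.2 (filter_subset _ _))
    calc Fintype.card V1 = ∑ T ∈ W.powerset, (univ.filter fun u => f u = T).card := h1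
      _ ≤ W.powerset.card • (univ.filter fun u => f u = S).card :=
          Finset.sum_le_card_nsmul _ _ _ (fun x hx => hmax x hx)
      _ = 2 ^ W.card * (univ.filter fun u => f u = S).card := by
          rw [Finset.card_powerset, smul_eq_mul]
  · intro u hu u' hu' w hw
    simp only [mem_filter, mem_univ, true_and] at hu hu'
    have h : (w ∈ f u) ↔ (w ∈ f u') := by rw [hu, hu']
    simpa [hf, mem_filter, hw] using h

lemma logb_le_sqrt (x : ℝ) (hx : 1 ≤ x) : Real.logb 2 x ≤ 4 * Real.sqrt x := by
  have hx0 : 0 < x := lt_of_lt_of_le one_pos hx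
  have hs : 0 < Real.sqrt x := Real.sqrt_pos.2 hx0
  have h1 : Real.log x ≤ 2 * Real.sqrt x := by
    have h2 := Real.log_le_sub_one_of_pos hs
    have hsq : Real.log x = 2 * Real.log (Real.sqrt x) := by
      rw [Real.log_sqrt hx0.le]; ring
    linarith
  have hl2 : (1:ℝ)/2 < Real.log 2 := by
    have := Real.log_two_gt_d9; norm_num at this ⊢; linarith
  rw [Real.logb, div_le_iff₀ (by linarith)]
  nlinarith [hs.le]

set_option maxHeartbeats 1000000 in
theorem stmt19 (C : ℝ) (hC : 1 < C) :
    ∃ (n0 : ℕ) (K : ℝ), ∀ (V1 V2 : Type) [Fintype V1] [Fintype V2]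
      (E : V1 → V2 → Prop) [∀ a b, Decidable (E a b)],
      BipRamsey E C →
      Fintype.card V2 ≤ Fintype.card V1 →
      n0 ≤ Fintype.card V2 →
      -- pigeonhole: every `W ⊆ V2` of size `2C log₂|V2|` admits a large set of
      -- vertices of `V1` with identical neighbourhoods in `W`
      (∀ W : Finset V2, W.card = ⌈2 * C * Real.logb 2 (Fintype.card V2)⌉₊ →
        ∃ U : Finset V1,
          (Fintype.card V1 : ℝ) * 2 ^ (-(W.card : ℝ)) ≤ (U.card : ℝ) ∧
          ∀ u ∈ U, ∀ u' ∈ U, ∀ w ∈ W, (E u w ↔ E u' w)) ∧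
      -- consequently the part sizes are polynomially related
      (Fintype.card V1 : ℝ) ≤ (Fintype.card V2 : ℝ) ^ K := by
  refine ⟨⌈64 * C^2⌉₊, 4*C+1, ?_⟩
  intro V1 V2 _ _ E _ hRam hle hn0
  classical
  set n1 := Fintype.card V1 with hn1
  set n2 := Fintype.card V2 with hn2
  have hC0 : (0:ℝ) < C := by linarith
  have h64 : (64 * C^2 : ℝ) ≤ (n2:ℝ) :=
    le_trans (Nat.le_ceil _) (by exact_mod_cast hn0)
  have hn2_1 : (1:ℝ) ≤ (n2:ℝ) := by nlinarith
  have hn2pos : (0:ℝ) < (n2:ℝ) := lt_of_lt_of_le one_pos hn2_1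
  have hn1_1 : (1:ℝ) ≤ (n1:ℝ) := le_trans hn2_1 (by exact_mod_cast hle)
  have hn1pos : (0:ℝ) < (n1:ℝ) := lt_of_lt_of_le one_pos hn1_1
  have hsqrt2 : 8*C ≤ Real.sqrt (n2:ℝ) := by
    rw [show (8*C : ℝ) = Real.sqrt ((8*C)^2) from (Real.sqrt_sq (by linarith)).symm]
    exact Real.sqrt_le_sqrt (by nlinarith)
  have hlogn2 : Real.logb 2 (n2:ℝ) ≤ 4 * Real.sqrt (n2:ℝ) := logb_le_sqrt _ hn2_1
  have hlogn1 : Real.logb 2 (n1:ℝ) ≤ 4 * Real.sqrt (n1:ℝ) := logb_le_sqrt _ hn1_1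
  have hlogb2_nonneg : 0 ≤ Real.logb 2 (n2:ℝ) := Real.logb_nonneg one_lt_two hn2_1
  have key : ∀ W : Finset V2, ∃ U : Finset V1,
      (n1:ℝ) * 2 ^ (-(W.card:ℝ)) ≤ (U.card:ℝ) ∧
      ∀ u ∈ U, ∀ u' ∈ U, ∀ w ∈ W, (E u w ↔ E u' w) := by
    intro W
    obtain ⟨U, hU1, hU2⟩ := pigeon E W
    refine ⟨U, ?_, hU2⟩
    rw [Real.rpow_neg (by norm_num : (0:ℝ) ≤ 2), ← div_eq_mul_inv,
      div_le_iff₀ (Real.rpow_pos_of_pos two_pos _)]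
    have hpow : ((2:ℝ))^(W.card:ℝ) = ((2^W.card : ℕ) : ℝ) := by
      rw [Real.rpow_natCast]; push_cast; ring
    rw [hpow]
    calc (n1:ℝ) ≤ ((2^W.card * U.card : ℕ):ℝ) := by exact_mod_cast hU1
      _ = (U.card:ℝ) * ((2^W.card:ℕ):ℝ) := by push_cast; ring
  refine ⟨fun W _ => key W, ?_⟩
  set m := ⌈2 * C * Real.logb 2 (n2:ℝ)⌉₊ with hm
  have hceil_le : 2 * C * Real.logb 2 (n2:ℝ) ≤ (n2:ℝ) := by
    nlinarith [Real.mul_self_sqrt hn2pos.le, Real.sqrt_nonneg (n2:ℝ), hlogn2, hsqrt2]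
  have hmn2 : m ≤ n2 := Nat.ceil_le.2 hceil_le
  obtain ⟨W, hWsub, hWcard⟩ := Finset.exists_subset_card_eq (s := (univ : Finset V2)) (n := m)
    (by simpa using hmn2)
  obtain ⟨U, hU1, hU2⟩ := key W
  have hWlb : 2 * C * Real.logb 2 (n2:ℝ) ≤ (W.card:ℝ) := by
    rw [hWcard]; exact Nat.le_ceil _
  have hWub : (W.card:ℝ) ≤ 2 * C * Real.logb 2 (n2:ℝ) + 1 := by
    rw [hWcard]; exact (Nat.ceil_lt_add_one (by positivity)).le
  have hUpos : (0:ℝ) < (U.card:ℝ) :=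
    lt_of_lt_of_le (mul_pos hn1pos (Real.rpow_pos_of_pos two_pos _)) hU1
  obtain ⟨u0, hu0⟩ := Finset.card_pos.1 (by exact_mod_cast hUpos)
  set B1 := W.filter (fun w => E u0 w) with hB1def
  set B0 := W.filter (fun w => ¬ E u0 w) with hB0def
  have hsplit : B1.card + B0.card = W.card :=
    Finset.card_filter_add_card_filter_not _
  have hBor : C * Real.logb 2 (n2:ℝ) ≤ (B1.card:ℝ) ∨ C * Real.logb 2 (n2:ℝ) ≤ (B0.card:ℝ) := by
    by_contra h
    push_neg at h
    have hc : ((B1.card:ℝ) + (B0.card:ℝ)) = (W.card:ℝ) := by exact_mod_cast hsplit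
    linarith [h.1, h.2]
  have hUsmall : (U.card : ℝ) < C * Real.logb 2 (n1:ℝ) := by
    by_contra h
    push_neg at h
    rcases hBor with hb | hb
    · exact hRam U B1 h hb (Or.inl (fun a ha b hbm =>
        (hU2 u0 hu0 a ha b (Finset.filter_subset _ _ hbm)).1 (Finset.mem_filter.1 hbm).2))
    · exact hRam U B0 h hb (Or.inr (fun a ha b hbm hE =>
        (Finset.mem_filter.1 hbm).2 ((hU2 a ha u0 hu0 b (Finset.filter_subset _ _ hbm)).1 hE)))
  have hchain : (n1:ℝ) ≤ (U.card:ℝ) * 2 ^ (W.card:ℝ) := by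
    have h := mul_le_mul_of_nonneg_right hU1 (Real.rpow_pos_of_pos two_pos (W.card:ℝ)).le
    rwa [mul_assoc, ← Real.rpow_add two_pos, neg_add_cancel, Real.rpow_zero, mul_one] at h
  have hpowW : (2:ℝ) ^ (W.card:ℝ) ≤ 2 * (n2:ℝ) ^ (2*C) := by
    have h1 : (2:ℝ)^(W.card:ℝ) ≤ 2 ^ (2*C*Real.logb 2 (n2:ℝ) + 1) :=
      Real.rpow_le_rpow_of_exponent_le one_le_two hWub
    have h2 : (2:ℝ) ^ (2*C*Real.logb 2 (n2:ℝ) + 1) = 2 * (n2:ℝ)^(2*C) := by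
      rw [Real.rpow_add two_pos, Real.rpow_one,
        show (2*C*Real.logb 2 (n2:ℝ)) = Real.logb 2 (n2:ℝ) * (2*C) by ring,
        Real.rpow_mul (by norm_num : (0:ℝ) ≤ 2),
        Real.rpow_logb two_pos (by norm_num) hn2pos]
      ring
    linarith [h2 ▸ h1]
  have hfin : (n1:ℝ) < 8*C*(n2:ℝ)^(2*C) * Real.sqrt (n1:ℝ) := by
    calc (n1:ℝ) ≤ (U.card:ℝ) * 2 ^ (W.card:ℝ) := hchain
      _ < (C * Real.logb 2 (n1:ℝ)) * 2 ^ (W.card:ℝ) :=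
          mul_lt_mul_of_pos_right hUsmall (Real.rpow_pos_of_pos two_pos _)
      _ ≤ (C * (4*Real.sqrt (n1:ℝ))) * (2*(n2:ℝ)^(2*C)) := by
          apply mul_le_mul
          · nlinarith [hlogn1]
          · exact hpowW
          · exact (Real.rpow_pos_of_pos two_pos _).le
          · positivity
      _ = 8*C*(n2:ℝ)^(2*C) * Real.sqrt (n1:ℝ) := by ring
  have hsq : Real.sqrt (n1:ℝ) < 8*C*(n2:ℝ)^(2*C) := by
    have hs : 0 < Real.sqrt (n1:ℝ) := Real.sqrt_pos.2 hn1pos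
    nlinarith [Real.mul_self_sqrt hn1pos.le]
  have hfinal : (n1:ℝ) < 64*C^2 * ((n2:ℝ)^(2*C) * (n2:ℝ)^(2*C)) := by
    have hK : (0:ℝ) < 8*C*(n2:ℝ)^(2*C) :=
      mul_pos (by linarith) (Real.rpow_pos_of_pos hn2pos _)
    have h := mul_lt_mul' hsq.le hsq (Real.sqrt_nonneg _) hK
    rw [Real.mul_self_sqrt hn1pos.le] at h
    have heq : (8*C*(n2:ℝ)^(2*C))*(8*C*(n2:ℝ)^(2*C)) = 64*C^2*((n2:ℝ)^(2*C)*(n2:ℝ)^(2*C)) := by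
      ring
    linarith [heq ▸ h]
  have hp : (n2:ℝ)^(2*C) * (n2:ℝ)^(2*C) = (n2:ℝ)^(4*C) := by
    rw [← Real.rpow_add hn2pos]; ring_nf
  rw [Real.rpow_add hn2pos, Real.rpow_one]
  rw [hp] at hfinal
  nlinarith [Real.rpow_pos_of_pos hn2pos (4*C), h64, hfinal]
end
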